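/- The bilinear map T on G(d) defined by T_u v := ½ λ^{-1}([λu, λv]_m) (where [·,·] is the double-extension bracket on g and u_m is the m-component along h) is given explicitly by T_{x1+ℓ(h1)}(x2+ℓ(h2)) = ½([x1,x2]_d + β(x1,x2) + π(h1)x2 − π(h2)x1) + ℓ([h1,h2]_h), and it satisfies T_u u = 0 and ⟨T_u v, w⟩ + ⟨v, T_u w⟩ = 0 for all u,v,w ∈ G(d). -/
import Mathlib


open Module

variable {H D : Type} [LieRing H] [LieAlgebra ℝ H] [FiniteDimensional ℝ H]
  [LieRing D] [LieAlgebra ℝ D] [FiniteDimensional ℝ D]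

/-- `beta BD π x y` is the element `β(x,y)` of `h*` given by `a ↦ ⟨π(a)x, y⟩_d`. -/
def beta (BD : LinearMap.BilinForm ℝ D) (π : H →ₗ[ℝ] D →ₗ[ℝ] D) (x y : D) : Dual ℝ H :=
  (BD.flip y).comp (π.flip x)

/-- The double extension bracket on `g = h ⊕ d ⊕ h*`. -/
def dbr (BD : LinearMap.BilinForm ℝ D) (π : H →ₗ[ℝ] D →ₗ[ℝ] D)
    (u v : H × D × Dual ℝ H) : H × D × Dual ℝ H :=
  (⁅u.1, v.1⁆,
   ⁅u.2.1, v.2.1⁆ + π u.1 v.2.1 - π v.1 u.2.1,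
   beta BD π u.2.1 v.2.1 - v.2.2.comp (LieAlgebra.ad ℝ H u.1)
     + u.2.2.comp (LieAlgebra.ad ℝ H v.1))

/-- The inverse of the isomorphism `ℓ : h → h*`, `ℓ(h) = ⟨h,·⟩_h`. -/
noncomputable def ellInv (BH : LinearMap.BilinForm ℝ H) (hBH : BH.Nondegenerate)
    (α : Dual ℝ H) : H :=
  (LinearMap.BilinForm.toDual BH hBH).symm α

/-- The metric on `G(d)`: `⟨x₁ + ℓ(h₁), x₂ + ℓ(h₂)⟩ = ⟨h₁,h₂⟩_h + ⟨x₁,x₂⟩_d`. -/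
noncomputable def gform (BH : LinearMap.BilinForm ℝ H) (hBH : BH.Nondegenerate)
    (BD : LinearMap.BilinForm ℝ D) (u v : D × Dual ℝ H) : ℝ :=
  BD u.1 v.1 + BH (ellInv BH hBH u.2) (ellInv BH hBH v.2)

/-- The map `λ : G(d) → m`, `λ(x + ℓ(h)) = (h, x, ℓ(h))`. -/
noncomputable def lam (BH : LinearMap.BilinForm ℝ H) (hBH : BH.Nondegenerate)
    (u : D × Dual ℝ H) : H × D × Dual ℝ H :=
  (ellInv BH hBH u.2, u.1, u.2)

/-- The projection of `g` onto `m = {(h,x,ℓ(h))}` along `h`. -/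
noncomputable def pmG (BH : LinearMap.BilinForm ℝ H) (hBH : BH.Nondegenerate)
    (w : H × D × Dual ℝ H) : H × D × Dual ℝ H :=
  (ellInv BH hBH w.2.2, w.2.1, w.2.2)

/-- The inverse of `λ` (defined on `m`): `λ⁻¹(h, x, ℓ(h)) = x + ℓ(h)`. -/
def lamInv (w : H × D × Dual ℝ H) : D × Dual ℝ H := (w.2.1, w.2.2)

/-- The tensor `T_u v = ½ λ⁻¹([λu, λv]_m)` on `G(d)`. -/
noncomputable def Tmap (BH : LinearMap.BilinForm ℝ H) (hBH : BH.Nondegenerate)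
    (BD : LinearMap.BilinForm ℝ D) (π : H →ₗ[ℝ] D →ₗ[ℝ] D)
    (u v : D × Dual ℝ H) : D × Dual ℝ H :=
  (2⁻¹ : ℝ) • lamInv (pmG BH hBH (dbr BD π (lam BH hBH u) (lam BH hBH v)))

lemma ellInv_BH_apply (BH : LinearMap.BilinForm ℝ H) (hBH : BH.Nondegenerate) (h : H) :
    ellInv BH hBH (BH h) = h := by
  have : (LinearMap.BilinForm.toDual BH hBH) h = BH h := by
    ext a; exact LinearMap.BilinForm.toDual_def hBH
  rw [ellInv, ← this, LinearEquiv.symm_apply_apply]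

lemma BH_ellInv_apply (BH : LinearMap.BilinForm ℝ H) (hBH : BH.Nondegenerate) (α : Dual ℝ H) :
    BH (ellInv BH hBH α) = α := by
  have h1 : (LinearMap.BilinForm.toDual BH hBH) (ellInv BH hBH α) = α :=
    (LinearMap.BilinForm.toDual BH hBH).apply_symm_apply α
  ext a
  conv_rhs => rw [← h1]
  exact (LinearMap.BilinForm.toDual_def hBH).symm

/-- Theorem 3.4 (algebraic part): the tensor `T_u v = ½ λ⁻¹([λu,λv]_m)` is given explicitly
by `T_{x₁+ℓ(h₁)}(x₂+ℓ(h₂)) = ½([x₁,x₂]_d + β(x₁,x₂) + π(h₁)x₂ − π(h₂)x₁) + ℓ([h₁,h₂]_h)`,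
and satisfies `T_u u = 0` and `⟨T_u v, w⟩ + ⟨v, T_u w⟩ = 0`. -/
theorem Tmap_naturally_reductive_structure
    (BH : LinearMap.BilinForm ℝ H)
    (hBHsymm : ∀ a b : H, BH a b = BH b a)
    (hBHnd : BH.Nondegenerate)
    (hBHinv : ∀ a b c : H, BH ⁅a, b⁆ c = - BH b ⁅a, c⁆)
    (BD : LinearMap.BilinForm ℝ D)
    (hBDsymm : ∀ x y : D, BD x y = BD y x)
    (hBDnd : BD.Nondegenerate)
    (hBDinv : ∀ x y z : D, BD ⁅x, y⁆ z = - BD y ⁅x, z⁆)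
    (π : H →ₗ[ℝ] D →ₗ[ℝ] D)
    (hπder : ∀ a : H, ∀ x y : D, π a ⁅x, y⁆ = ⁅π a x, y⁆ + ⁅x, π a y⁆)
    (hπhom : ∀ a b : H, π ⁅a, b⁆ = π a ∘ₗ π b - π b ∘ₗ π a)
    (hπskew : ∀ a : H, ∀ x y : D, BD (π a x) y = - BD x (π a y)) :
    -- explicit formula
    (∀ (x₁ x₂ : D) (h₁ h₂ : H),
      Tmap BH hBHnd BD π (x₁, BH h₁) (x₂, BH h₂)
        = ((2⁻¹ : ℝ) • (⁅x₁, x₂⁆ + π h₁ x₂ - π h₂ x₁),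
           (2⁻¹ : ℝ) • beta BD π x₁ x₂ + BH ⁅h₁, h₂⁆)) ∧
    -- T_u u = 0
    (∀ u : D × Dual ℝ H, Tmap BH hBHnd BD π u u = 0) ∧
    -- skew-symmetry: ⟨T_u v, w⟩ + ⟨v, T_u w⟩ = 0
    (∀ u v w : D × Dual ℝ H,
      gform BH hBHnd BD (Tmap BH hBHnd BD π u v) w
        + gform BH hBHnd BD v (Tmap BH hBHnd BD π u w) = 0) := by
  have formula : ∀ (x₁ x₂ : D) (h₁ h₂ : H),
      Tmap BH hBHnd BD π (x₁, BH h₁) (x₂, BH h₂)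
        = ((2⁻¹ : ℝ) • (⁅x₁, x₂⁆ + π h₁ x₂ - π h₂ x₁),
           (2⁻¹ : ℝ) • beta BD π x₁ x₂ + BH ⁅h₁, h₂⁆) := by
    intro x₁ x₂ h₁ h₂
    have e1 : (BH h₂).comp (LieAlgebra.ad ℝ H h₁) = - BH ⁅h₁, h₂⁆ := by
      ext a
      simp only [LinearMap.comp_apply, LieAlgebra.ad_apply, LinearMap.neg_apply]
      rw [hBHinv h₁ h₂ a]; ring
    have e2 : (BH h₁).comp (LieAlgebra.ad ℝ H h₂) = BH ⁅h₁, h₂⁆ := by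
      ext a
      simp only [LinearMap.comp_apply, LieAlgebra.ad_apply]
      have := hBHinv h₂ h₁ a
      have h3 : (⁅h₂, h₁⁆ : H) = -⁅h₁, h₂⁆ := by rw [← lie_skew]
      rw [h3, map_neg] at this
      simp only [LinearMap.neg_apply] at this
      linarith
    simp only [Tmap, lam, ellInv_BH_apply, dbr, pmG, lamInv, Prod.smul_mk, Prod.mk.injEq]
    refine ⟨trivial, ?_⟩
    rw [e1, e2]
    ext a
    simp only [LinearMap.smul_apply, LinearMap.add_apply, LinearMap.sub_apply,
      LinearMap.neg_apply, smul_eq_mul]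
    ring
  refine ⟨formula, ?_, ?_⟩
  · intro u
    obtain ⟨x, α⟩ := u
    have hα : α = BH (ellInv BH hBHnd α) := (BH_ellInv_apply BH hBHnd α).symm
    rw [hα, formula]
    have hb : beta BD π x x = 0 := by
      ext a
      have hba : beta BD π x x a = BD (π a x) x := rfl
      rw [hba, LinearMap.zero_apply]
      have h1 := hπskew a x x
      have h2 := hBDsymm x (π a x)
      linarith
    simp [hb]
  · intro u v w
    obtain ⟨x₂, α₂⟩ := v
    obtain ⟨x₃, α₃⟩ := w
    obtain ⟨x₁, α₁⟩ := u
    set h₁ := ellInv BH hBHnd α₁ with hh1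
    set h₂ := ellInv BH hBHnd α₂ with hh2
    set h₃ := ellInv BH hBHnd α₃ with hh3
    have e1 : α₁ = BH h₁ := (BH_ellInv_apply BH hBHnd α₁).symm
    have e2 : α₂ = BH h₂ := (BH_ellInv_apply BH hBHnd α₂).symm
    have e3 : α₃ = BH h₃ := (BH_ellInv_apply BH hBHnd α₃).symm
    rw [e1, e2, e3, formula, formula]
    simp only [gform, ellInv_BH_apply]
    have key : ∀ (h : H) (α : Dual ℝ H), ellInv BH hBHnd α = ellInv BH hBHnd α := fun _ _ => rfl
    have r2 : ellInv BH hBHnd ((2⁻¹ : ℝ) • beta BD π x₁ x₂ + BH ⁅h₁, h₂⁆)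
        = (2⁻¹ : ℝ) • ellInv BH hBHnd (beta BD π x₁ x₂) + ⁅h₁, h₂⁆ := by
      simp only [ellInv, map_add, map_smul]
      congr 1
      exact ellInv_BH_apply BH hBHnd _
    have r3 : ellInv BH hBHnd ((2⁻¹ : ℝ) • beta BD π x₁ x₃ + BH ⁅h₁, h₃⁆)
        = (2⁻¹ : ℝ) • ellInv BH hBHnd (beta BD π x₁ x₃) + ⁅h₁, h₃⁆ := by
      simp only [ellInv, map_add, map_smul]
      congr 1
      exact ellInv_BH_apply BH hBHnd _
    rw [r2, r3]
    have hb : ∀ x y : D, ∀ h : H, BH (ellInv BH hBHnd (beta BD π x y)) h = BD (π h x) y := by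
      intro x y h
      rw [BH_ellInv_apply]
      simp [beta]
    have hb' : ∀ x y : D, ∀ h : H, BH h (ellInv BH hBHnd (beta BD π x y)) = BD (π h x) y := by
      intro x y h
      rw [hBHsymm, hb]
    simp only [map_add, map_smul, LinearMap.add_apply, LinearMap.smul_apply, smul_eq_mul]
    have t1 : BD (⁅x₁, x₂⁆ + π h₁ x₂ - π h₂ x₁) x₃
        = BD ⁅x₁, x₂⁆ x₃ + BD (π h₁ x₂) x₃ - BD (π h₂ x₁) x₃ := by
      simp only [map_add, map_sub, LinearMap.add_apply, LinearMap.sub_apply]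
    have t2 : BD x₂ (⁅x₁, x₃⁆ + π h₁ x₃ - π h₃ x₁)
        = BD x₂ ⁅x₁, x₃⁆ + BD x₂ (π h₁ x₃) - BD x₂ (π h₃ x₁) := by
      simp only [map_add, map_sub]
    rw [t1, t2, hb x₁ x₂ h₃, hb' x₁ x₃ h₂]
    have s1 : BD ⁅x₁, x₂⁆ x₃ = - BD x₂ ⁅x₁, x₃⁆ := hBDinv x₁ x₂ x₃
    have s2 : BD (π h₁ x₂) x₃ = - BD x₂ (π h₁ x₃) := hπskew h₁ x₂ x₃
    have s3 : BD (π h₃ x₁) x₂ = BD x₂ (π h₃ x₁) := hBDsymm _ _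
    have s4 : BH ⁅h₁, h₂⁆ h₃ = - BH h₂ ⁅h₁, h₃⁆ := hBHinv h₁ h₂ h₃
    linarith [s1, s2, s3, s4]
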